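/- Let $e = \sum_i x_i \otimes y_i$ be a separability element for a ring extension $A/S$ with a ring map $\pi: A \to S$ splitting the inclusion ($\pi|_S = \mathrm{id}_S$). Then the element $f = \sum_i \pi(x_i) y_i \in A$ is a central idempotent of $A$ satisfying $f x = \pi(x) f$ for all $x \in A$. -/

import Mathlib

/-- Let `e = ∑ᵢ xᵢ ⊗ yᵢ` be a separability element for a ring extension `A/S`
(`∑ᵢ xᵢ yᵢ = 1` and `a • e = e • a` in `A ⊗_S A` for all `a`, the latter encoded
by evaluation against all `S`-balanced biadditive maps), and let `π : A → S` be
a ring homomorphism splitting the inclusion (`π|_S = id_S`).  Then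
`f = ∑ᵢ π(xᵢ) yᵢ` is a central idempotent of `A` with `f x = π(x) f` for all `x`. -/
theorem biseparable_stmt2 {A : Type*} [Ring A] (S : Subring A)
    (π : A →+* S) (hπ : ∀ s : S, π (s : A) = s)
    (n : ℕ) (x y : Fin n → A)
    (hunit : (∑ i, x i * y i) = 1)
    (hcas : ∀ (Z : Type*) [AddCommGroup Z] (b : A →+ A →+ Z),
      (∀ (s : S) (a c : A), b (a * s) c = b a (s * c)) →
      ∀ r : A, (∑ i, b (r * x i) (y i)) = ∑ i, b (x i) (y i * r)) :
    IsIdempotentElem (∑ i, (π (x i) : A) * y i) ∧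
    (∀ a : A, a * (∑ i, (π (x i) : A) * y i) = (∑ i, (π (x i) : A) * y i) * a) ∧
    (∀ a : A, (∑ i, (π (x i) : A) * y i) * a = (π a : A) * ∑ i, (π (x i) : A) * y i) := by
  -- Step 0: transfer the Casimir condition to `A`-valued maps via characters.
  have hcasA : ∀ (b : A →+ A →+ A),
      (∀ (s : S) (a c : A), b (a * s) c = b a (s * c)) →
      ∀ r : A, (∑ i, b (r * x i) (y i)) = ∑ i, b (x i) (y i * r) := by
    intro b hb r
    rw [← sub_eq_zero]
    refine CharacterModule.eq_zero_of_character_apply (fun χ => ?_)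
    have hup : ∀ z w : A, ULift.up (χ (z + w)) = ULift.up (χ z) + ULift.up (χ w) := by
      intro z w; rw [map_add]; rfl
    let b' : A →+ A →+ ULift (AddCircle (1 : ℚ)) :=
      AddMonoidHom.mk'
        (fun u => AddMonoidHom.mk' (fun c => ULift.up (χ (b u c)))
          (fun c d => by rw [map_add, hup]))
        (fun u v => by ext c; simp only [AddMonoidHom.mk'_apply, map_add,
          AddMonoidHom.add_apply]; rfl)
    have h := hcas (ULift (AddCircle (1 : ℚ))) b'
      (fun s a c => by simp only [b', AddMonoidHom.mk'_apply, hb]) r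
    have h' := congrArg (AddEquiv.ulift : ULift (AddCircle (1 : ℚ)) ≃+ _) h
    simp only [map_sum] at h'
    have h'' : (∑ i, χ (b (r * x i) (y i))) = ∑ i, χ (b (x i) (y i * r)) := h'
    simp only [map_sub, map_sum]
    rw [h'', sub_self]
  set f : A := ∑ i, (π (x i) : A) * y i with hf
  set g : A := ∑ i, x i * (π (y i) : A) with hg
  -- balanced map (u, c) ↦ π(u) * c
  have key1 : ∀ r : A, (π r : A) * f = f * r := by
    intro r
    have h := hcasA
      (AddMonoidHom.mk'
        (fun u => AddMonoidHom.mk' (fun c => (π u : A) * c) (fun c d => mul_add _ _ _))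
        (fun u v => by ext c; simp [add_mul]))
      (fun s a c => by simp [map_mul, hπ, mul_assoc]) r
    simp only [AddMonoidHom.mk'_apply, map_mul] at h
    calc (π r : A) * f = ∑ i, ((π r : A) * (π (x i) : A)) * y i := by
          rw [hf, Finset.mul_sum]; simp [mul_assoc]
      _ = ∑ i, (π (x i) : A) * (y i * r) := by
          rw [← h]; refine Finset.sum_congr rfl fun i _ => ?_; push_cast; ring
      _ = f * r := by rw [hf, Finset.sum_mul]; simp [mul_assoc]
  -- balanced map (u, c) ↦ u * π(c)
  have key2 : ∀ r : A, r * g = g * (π r : A) := by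
    intro r
    have h := hcasA
      (AddMonoidHom.mk'
        (fun u => AddMonoidHom.mk' (fun c => u * (π c : A)) (fun c d => by
          rw [map_add]; push_cast; rw [mul_add]))
        (fun u v => by ext c; simp [add_mul]))
      (fun s a c => by simp [map_mul, hπ, mul_assoc]) r
    simp only [AddMonoidHom.mk'_apply, map_mul] at h
    calc r * g = ∑ i, (r * x i) * (π (y i) : A) := by
          rw [hg, Finset.mul_sum]; simp [mul_assoc]
      _ = ∑ i, x i * ((π (y i) : A) * (π r : A)) := by
          rw [h]; refine Finset.sum_congr rfl fun i _ => ?_; push_cast; ring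
      _ = g * (π r : A) := by rw [hg, Finset.sum_mul]; simp [mul_assoc]
  have hπf : π f = 1 := by
    have : π f = π (∑ i, x i * y i) := by
      rw [hf, map_sum, map_sum]
      refine Finset.sum_congr rfl fun i _ => ?_
      rw [map_mul, map_mul, hπ]
    rw [this, hunit, map_one]
  have hfg : f * g = g := by
    have := key2 f
    rwa [hπf, Subring.coe_one, mul_one] at this
  have hcomm : ∀ s : S, f * (s : A) = (s : A) * f := by
    intro s
    have := key1 (s : A)
    rw [hπ s] at this
    exact this.symm
  have hfg' : f * g = f := by
    rw [hg, Finset.mul_sum]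
    calc ∑ i, f * (x i * (π (y i) : A))
        = ∑ i, ((π (x i) : A) * (π (y i) : A)) * f := by
          refine Finset.sum_congr rfl fun i _ => ?_
          rw [← mul_assoc, ← key1 (x i), mul_assoc, hcomm (π (y i)), ← mul_assoc]
      _ = (∑ i, ((π (x i) : A) * (π (y i) : A))) * f := by rw [Finset.sum_mul]
      _ = f := by
          have h1 : (∑ i, ((π (x i) : A) * (π (y i) : A))) = ((π (∑ i, x i * y i) : S) : A) := by
            push_cast [map_sum, map_mul]; rfl
          rw [h1, hunit, map_one, Subring.coe_one, one_mul]
  have hfeqg : f = g := by rw [← hfg', hfg]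
  have hidem : IsIdempotentElem f := by
    have := key1 f
    rw [hπf, Subring.coe_one, one_mul] at this
    exact this.symm
  refine ⟨hidem, fun a => ?_, fun a => (key1 a).symm⟩
  calc a * f = a * g := by rw [hfeqg]
    _ = g * (π a : A) := key2 a
    _ = f * (π a : A) := by rw [hfeqg]
    _ = (π a : A) * f := hcomm (π a)
    _ = f * a := key1 a
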